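/- Let Φ: ℝ^p ⇉ ℝ^q be a polyhedral sublinear set-valued mapping whose domain dom(Φ) is a linear subspace of ℝ^p. Then the Hoffman constant of Φ equals its norm: H(Φ) = ‖Φ‖. -/

import Mathlib

open Matrix Set

noncomputable section

/-- A norm on `Fin n → ℝ`, given as a function with the norm axioms. -/
structure IsNorm {n : ℕ} (ν : (Fin n → ℝ) → ℝ) : Prop where
  nonneg : ∀ x, 0 ≤ ν x
  eq_zero_iff : ∀ x, ν x = 0 ↔ x = 0
  smul : ∀ (a : ℝ) (x : Fin n → ℝ), ν (a • x) = |a| * ν x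
  triangle : ∀ x y, ν (x + y) ≤ ν x + ν y

/-- The dual norm of `ν`, with respect to the standard dot-product pairing. -/
def dualNorm {n : ℕ} (ν : (Fin n → ℝ) → ℝ) (z : Fin n → ℝ) : ℝ :=
  sSup {r | ∃ x, ν x ≤ 1 ∧ r = z ⬝ᵥ x}

/-- Point-to-set distance induced by the norm `ν`. -/
def distWith {n : ℕ} (ν : (Fin n → ℝ) → ℝ) (x : Fin n → ℝ) (S : Set (Fin n → ℝ)) : ℝ :=
  sInf ((fun s => ν (x - s)) '' S)

/-- The graph of a set-valued mapping. -/
def graphOf {p q : ℕ} (Φ : (Fin p → ℝ) → Set (Fin q → ℝ)) :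
    Set ((Fin p → ℝ) × (Fin q → ℝ)) := {z | z.2 ∈ Φ z.1}

/-- The domain of a set-valued mapping. -/
def domOf {p q : ℕ} (Φ : (Fin p → ℝ) → Set (Fin q → ℝ)) : Set (Fin p → ℝ) :=
  {u | (Φ u).Nonempty}

/-- The image of a set-valued mapping. -/
def imOf {p q : ℕ} (Φ : (Fin p → ℝ) → Set (Fin q → ℝ)) : Set (Fin q → ℝ) :=
  ⋃ u, Φ u

/-- The inverse of a set-valued mapping. -/
def invOf {p q : ℕ} (Φ : (Fin p → ℝ) → Set (Fin q → ℝ)) : (Fin q → ℝ) → Set (Fin p → ℝ) :=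
  fun v => {u | v ∈ Φ u}

/-- A polyhedron: an intersection of finitely many closed half-spaces. -/
def IsPolyhedron {E : Type*} [AddCommGroup E] [Module ℝ E] (S : Set E) : Prop :=
  ∃ (k : ℕ) (f : Fin k → E →ₗ[ℝ] ℝ) (c : Fin k → ℝ), S = {x | ∀ i, f i x ≤ c i}

/-- A set-valued mapping is polyhedral if its graph is a polyhedron. -/
def IsPolyhedralMapping {p q : ℕ} (Φ : (Fin p → ℝ) → Set (Fin q → ℝ)) : Prop :=
  IsPolyhedron (graphOf Φ)

/-- A set-valued mapping is sublinear if its graph is a convex cone containing the origin. -/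
def IsSublinearMapping {p q : ℕ} (Φ : (Fin p → ℝ) → Set (Fin q → ℝ)) : Prop :=
  (0 : Fin q → ℝ) ∈ Φ 0 ∧ Convex ℝ (graphOf Φ) ∧
    ∀ (t : ℝ), 0 ≤ t → ∀ z ∈ graphOf Φ, t • z ∈ graphOf Φ

/-- The Hoffman constant of a set-valued mapping, with respect to the norms `νp, νq`. -/
def hoffmanConst {p q : ℕ} (νp : (Fin p → ℝ) → ℝ) (νq : (Fin q → ℝ) → ℝ)
    (Φ : (Fin p → ℝ) → Set (Fin q → ℝ)) : ℝ :=
  sSup {r | ∃ u v, u ∈ domOf Φ ∧ v ∈ imOf Φ ∧ v ∉ Φ u ∧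
    r = distWith νq v (Φ u) / distWith νp u (invOf Φ v)}

/-- The norm of a sublinear set-valued mapping, with respect to the norms `νp, νq`. -/
def svmNorm {p q : ℕ} (νp : (Fin p → ℝ) → ℝ) (νq : (Fin q → ℝ) → ℝ)
    (Φ : (Fin p → ℝ) → Set (Fin q → ℝ)) : ℝ :=
  sSup {r | ∃ u, u ∈ domOf Φ ∧ νp u ≤ 1 ∧ r = sInf (νq '' Φ u)}

/-- The tangent cone to a set `G` at a point `g ∈ G`. -/
def polyTangentCone {E : Type*} [AddCommGroup E] [Module ℝ E] (G : Set E) (g : E) : Set E :=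
  {d | ∃ t : ℝ, 0 < t ∧ g + t • d ∈ G}

/-- The collection of tangent cones to the graph of `Φ`. -/
def tangentCones {p q : ℕ} (Φ : (Fin p → ℝ) → Set (Fin q → ℝ)) :
    Set (Set ((Fin p → ℝ) × (Fin q → ℝ))) :=
  {T | ∃ u v, v ∈ Φ u ∧ T = polyTangentCone (graphOf Φ) (u, v)}

/-- The set-valued mapping whose graph is `T`. -/
def mapOfGraph {p q : ℕ} (T : Set ((Fin p → ℝ) × (Fin q → ℝ))) :
    (Fin p → ℝ) → Set (Fin q → ℝ) := fun w => {z | (w, z) ∈ T}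

/-- A subset is a linear subspace if it is the underlying set of a submodule. -/
def IsLinearSubspace {E : Type*} [AddCommGroup E] [Module ℝ E] (S : Set E) : Prop :=
  ∃ W : Submodule ℝ E, S = ↑W

/-- The upper adjoint of a sublinear mapping. -/
def upperAdjoint {p q : ℕ} (Φ : (Fin p → ℝ) → Set (Fin q → ℝ)) :
    (Fin q → ℝ) → Set (Fin p → ℝ) :=
  fun w => {z | ∀ u v, v ∈ Φ u → z ⬝ᵥ u ≤ w ⬝ᵥ v}

/-- The solution mapping `b ↦ {x ∈ R : Ax - b ∈ S}`. -/
def solMap {m n : ℕ} (A : Matrix (Fin m) (Fin n) ℝ) (R : Set (Fin n → ℝ))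
    (S : Set (Fin m → ℝ)) : (Fin m → ℝ) → Set (Fin n → ℝ) :=
  fun b => {x | x ∈ R ∧ A *ᵥ x - b ∈ S}

/-- The dual cone `{z : ⟨z,x⟩ ≥ 0 for all x ∈ C}`. -/
def dualConeOf {n : ℕ} (C : Set (Fin n → ℝ)) : Set (Fin n → ℝ) :=
  {z | ∀ x ∈ C, 0 ≤ z ⬝ᵥ x}

/-- A polyhedral cone. -/
def IsPolyhedralCone {n : ℕ} (C : Set (Fin n → ℝ)) : Prop :=
  IsPolyhedron C ∧ (0 : Fin n → ℝ) ∈ C ∧ ∀ (t : ℝ), 0 ≤ t → ∀ x ∈ C, t • x ∈ C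

/-- The dual solution mapping `c ↦ {y ∈ S* : c - Aᵀy ∈ R*}`. -/
def dualSolMap {m n : ℕ} (A : Matrix (Fin m) (Fin n) ℝ) (R : Set (Fin n → ℝ))
    (S : Set (Fin m → ℝ)) : (Fin n → ℝ) → Set (Fin m → ℝ) :=
  fun c => {y | y ∈ dualConeOf S ∧ c - Aᵀ *ᵥ y ∈ dualConeOf R}

/-- The box `{x : ℓ ≤ x ≤ u}`. -/
def boxSet {n : ℕ} (ℓ u : Fin n → ℝ) : Set (Fin n → ℝ) :=
  {x | ∀ i, ℓ i ≤ x i ∧ x i ≤ u i}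

/-- The nonnegative orthant of `ℝ^n`. -/
def nonnegOrthant (n : ℕ) : Set (Fin n → ℝ) := {x | ∀ i, 0 ≤ x i}

/-- The Euclidean norm on `Fin n → ℝ`. -/
def euclNorm {n : ℕ} (x : Fin n → ℝ) : ℝ := Real.sqrt (∑ i, x i ^ 2)

/-- The operator norm induced by the Euclidean norms. -/
def opNorm2 {m n : ℕ} (M : Matrix (Fin m) (Fin n) ℝ) : ℝ :=
  sSup {r | ∃ x, euclNorm x ≤ 1 ∧ r = euclNorm (M *ᵥ x)}

/-- The chi condition measure `χ(A) = sup_{D} ‖(ADAᵀ)⁻¹AD‖₂`. -/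
def chiMeasure {m n : ℕ} (A : Matrix (Fin m) (Fin n) ℝ) : ℝ :=
  sSup {r | ∃ d : Fin n → ℝ, (∀ i, 0 < d i) ∧
    r = opNorm2 ((A * Matrix.diagonal d * Aᵀ)⁻¹ * (A * Matrix.diagonal d))}

/-- The chi-bar condition measure `χ̄(A) = sup_{D} ‖Aᵀ(ADAᵀ)⁻¹AD‖₂`. -/
def chiBarMeasure {m n : ℕ} (A : Matrix (Fin m) (Fin n) ℝ) : ℝ :=
  sSup {r | ∃ d : Fin n → ℝ, (∀ i, 0 < d i) ∧
    r = opNorm2 (Aᵀ * (A * Matrix.diagonal d * Aᵀ)⁻¹ * (A * Matrix.diagonal d))}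

/-- The orthogonal complement (w.r.t. the dot product) of a set. -/
def perpOf {m : ℕ} (L : Set (Fin m → ℝ)) : Set (Fin m → ℝ) :=
  {y | ∀ s ∈ L, y ⬝ᵥ s = 0}

/-- The mapping `P_A : b ↦ {x ≥ 0 : Ax = b}`. -/
def PA {m n : ℕ} (A : Matrix (Fin m) (Fin n) ℝ) : (Fin m → ℝ) → Set (Fin n → ℝ) :=
  fun b => {x | (∀ i, 0 ≤ x i) ∧ A *ᵥ x = b}

/-- The mapping `P_A* : c ↦ {y : Aᵀy ≤ c}`. -/
def PAstar {m n : ℕ} (A : Matrix (Fin m) (Fin n) ℝ) : (Fin n → ℝ) → Set (Fin m → ℝ) :=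
  fun c => {y | ∀ i, (Aᵀ *ᵥ y) i ≤ c i}

/-- Signature vectors: entries equal to `1` or `-1`. -/
def IsSignVector {n : ℕ} (d : Fin n → ℝ) : Prop := ∀ i, d i = 1 ∨ d i = -1

end

/- ======================= Auxiliary lemmas ======================= -/

section HoffmanAux
open Set

lemma IsNorm.zero {n : ℕ} {ν : (Fin n → ℝ) → ℝ} (h : IsNorm ν) : ν 0 = 0 :=
  (h.eq_zero_iff 0).2 rfl

lemma IsNorm.neg' {n : ℕ} {ν : (Fin n → ℝ) → ℝ} (h : IsNorm ν) (x : Fin n → ℝ) :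
    ν (-x) = ν x := by
  have := h.smul (-1) x; simpa using this

lemma IsNorm.sum_le {n : ℕ} {ν : (Fin n → ℝ) → ℝ} (h : IsNorm ν) {ι : Type*} (s : Finset ι)
    (f : ι → Fin n → ℝ) : ν (∑ i ∈ s, f i) ≤ ∑ i ∈ s, ν (f i) := by
  induction s using Finset.cons_induction with
  | empty => simp [h.zero]
  | cons a s ha ih =>
    rw [Finset.sum_cons, Finset.sum_cons]
    exact (h.triangle _ _).trans (by linarith)

/-- upper bound: `ν x ≤ D * ‖x‖` -/
lemma IsNorm.exists_upper {n : ℕ} {ν : (Fin n → ℝ) → ℝ} (h : IsNorm ν) :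
    ∃ D : ℝ, 0 ≤ D ∧ ∀ x, ν x ≤ D * ‖x‖ := by
  refine ⟨∑ i, ν (Pi.single i 1), Finset.sum_nonneg fun i _ => h.nonneg _, fun x => ?_⟩
  have hx : x = ∑ i, (x i) • (Pi.single i (1:ℝ) : Fin n → ℝ) := by
    funext j
    simp [Finset.sum_apply, Pi.single_apply]
  calc ν x ≤ ∑ i, ν ((x i) • (Pi.single i (1:ℝ) : Fin n → ℝ)) := by
        nth_rewrite 1 [hx]; exact h.sum_le _ _
    _ = ∑ i, |x i| * ν (Pi.single i 1) := by
        refine Finset.sum_congr rfl fun i _ => h.smul _ _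
    _ ≤ ∑ i, ‖x‖ * ν (Pi.single i 1) := by
        refine Finset.sum_le_sum fun i _ => ?_
        exact mul_le_mul_of_nonneg_right (by
          simpa using norm_le_pi_norm x i) (h.nonneg _)
    _ = (∑ i, ν (Pi.single i 1)) * ‖x‖ := by
        rw [Finset.sum_mul]; exact Finset.sum_congr rfl fun i _ => mul_comm _ _

lemma IsNorm.continuous {n : ℕ} {ν : (Fin n → ℝ) → ℝ} (h : IsNorm ν) : Continuous ν := by
  obtain ⟨D, hD, hb⟩ := h.exists_upper
  rw [Metric.continuous_iff]
  intro x ε hε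
  rcases eq_or_lt_of_le hD with hD0 | hD0
  · exact ⟨1, one_pos, fun y _ => by
      have h1 := hb (y - x)
      have h2 := hb (x - y)
      have hy1 : ν (y - x) ≤ 0 := by rw [← hD0] at h1; simpa using h1
      have hy2 : ν (x - y) ≤ 0 := by rw [← hD0] at h2; simpa using h2
      have e1 : ν y ≤ ν x := by
        have := h.triangle x (y - x); simp at this; nlinarith [h.nonneg (y-x)]
      have e2 : ν x ≤ ν y := by
        have := h.triangle y (x - y); simp at this; nlinarith [h.nonneg (x-y)]
      rw [Real.dist_eq]
      have : ν y = ν x := le_antisymm e1 e2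
      simpa [this] ⟩
  · refine ⟨ε / D, by positivity, fun y hy => ?_⟩
    rw [Real.dist_eq]
    rw [dist_eq_norm] at hy
    have e1 : ν y - ν x ≤ ν (y - x) := by
      have := h.triangle x (y - x); simp at this; linarith
    have e2 : ν x - ν y ≤ ν (y - x) := by
      have := h.triangle y (x - y); simp at this
      have hxy : ν (x - y) = ν (y - x) := by
        rw [← h.neg' (x-y)]; congr 1; abel
      linarith
    have : ν (y - x) ≤ D * ‖y - x‖ := hb _
    have hlt : D * ‖y - x‖ < D * (ε / D) := by
      apply mul_lt_mul_of_pos_left _ hD0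
      simpa [norm_sub_rev] using hy
    rw [mul_div_cancel₀ _ (ne_of_gt hD0)] at hlt
    rw [abs_sub_lt_iff]; constructor <;> linarith

/-- lower bound: `c * ‖x‖ ≤ ν x` with `c > 0` -/
lemma IsNorm.exists_lower {n : ℕ} {ν : (Fin n → ℝ) → ℝ} (h : IsNorm ν) :
    ∃ c : ℝ, 0 < c ∧ ∀ x, c * ‖x‖ ≤ ν x := by
  rcases Nat.eq_zero_or_pos n with hn | hn
  · refine ⟨1, one_pos, fun x => ?_⟩
    subst hn
    have hx0 : x = 0 := funext fun i => absurd i.2 (by omega)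
    subst hx0
    have h1 : ‖(0 : Fin 0 → ℝ)‖ = 0 := norm_zero
    rw [h1, h.zero]
    simp
  · have hne : (Metric.sphere (0 : Fin n → ℝ) 1).Nonempty := by
      refine ⟨Pi.single ⟨0, hn⟩ 1, ?_⟩
      rw [mem_sphere_iff_norm, sub_zero]
      haveI : Nonempty (Fin n) := ⟨⟨0, hn⟩⟩
      rw [Pi.norm_single]
      simp
    obtain ⟨x₀, hx₀s, hmin⟩ :=
      (isCompact_sphere (0 : Fin n → ℝ) 1).exists_isMinOn hne h.continuous.continuousOn
    have hx₀ : ‖x₀‖ = 1 := by simpa [mem_sphere_iff_norm] using hx₀s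
    have hx₀ne : x₀ ≠ 0 := by intro hc; rw [hc] at hx₀; simp at hx₀
    have hc : 0 < ν x₀ :=
      lt_of_le_of_ne (h.nonneg _) (Ne.symm fun hc => hx₀ne ((h.eq_zero_iff _).1 hc))
    refine ⟨ν x₀, hc, fun x => ?_⟩
    rcases eq_or_ne x 0 with rfl | hx
    · simp [h.zero]
    · have hxn : (0:ℝ) < ‖x‖ := norm_pos_iff.2 hx
      have hmem : ‖x‖⁻¹ • x ∈ Metric.sphere (0 : Fin n → ℝ) 1 := by
        simp [mem_sphere_iff_norm, norm_smul, abs_of_pos (inv_pos.2 hxn),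
          inv_mul_cancel₀ (ne_of_gt hxn)]
      have hmm := hmin hmem
      have hν : ν (‖x‖⁻¹ • x) = ‖x‖⁻¹ * ν x := by
        rw [h.smul]; congr 1; exact abs_of_pos (inv_pos.2 hxn)
      have hle : ν x₀ ≤ ‖x‖⁻¹ * ν x := hν ▸ hmm
      calc ν x₀ * ‖x‖ ≤ (‖x‖⁻¹ * ν x) * ‖x‖ := by nlinarith
        _ = ν x := by field_simp

section distWith

variable {n : ℕ} {ν : (Fin n → ℝ) → ℝ}

lemma distWith_bddBelow (hν : IsNorm ν) (x : Fin n → ℝ) (S : Set (Fin n → ℝ)) :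
    BddBelow ((fun s => ν (x - s)) '' S) :=
  ⟨0, fun r ⟨s, _, hr⟩ => hr ▸ hν.nonneg _⟩

lemma distWith_nonneg (hν : IsNorm ν) (x : Fin n → ℝ) (S : Set (Fin n → ℝ)) :
    0 ≤ distWith ν x S :=
  Real.sInf_nonneg fun r ⟨s, _, hr⟩ => hr ▸ hν.nonneg _

lemma distWith_le (hν : IsNorm ν) {x s : Fin n → ℝ} {S : Set (Fin n → ℝ)} (hs : s ∈ S) :
    distWith ν x S ≤ ν (x - s) :=
  csInf_le (distWith_bddBelow hν x S) (Set.mem_image_of_mem _ hs)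

lemma le_distWith {x : Fin n → ℝ} {S : Set (Fin n → ℝ)} (hS : S.Nonempty) {a : ℝ}
    (h : ∀ s ∈ S, a ≤ ν (x - s)) : a ≤ distWith ν x S := by
  refine le_csInf (hS.image _) ?_
  rintro r ⟨s, hs, rfl⟩
  exact h s hs

lemma distWith_pos (hν : IsNorm ν) {x : Fin n → ℝ} {S : Set (Fin n → ℝ)} (hS : IsClosed S)
    (hne : S.Nonempty) (hx : x ∉ S) : 0 < distWith ν x S := by
  obtain ⟨c, hc, hlow⟩ := hν.exists_lower
  obtain ⟨ε, hε, hball⟩ : ∃ ε > 0, Metric.ball x ε ⊆ Sᶜ :=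
    Metric.isOpen_iff.1 hS.isOpen_compl x hx
  refine lt_of_lt_of_le (show (0:ℝ) < c * ε by positivity) (le_distWith hne fun s hsS => ?_)
  have h1 : ε ≤ ‖x - s‖ := by
    by_contra hlt
    push_neg at hlt
    exact (hball (by simpa [Metric.mem_ball, dist_eq_norm, norm_sub_rev] using hlt)) hsS
  calc c * ε ≤ c * ‖x - s‖ := by nlinarith
    _ ≤ ν (x - s) := hlow _

end distWith

section cone

variable {p q : ℕ} {Φ : (Fin p → ℝ) → Set (Fin q → ℝ)}

lemma sub_add_mem (hsub : IsSublinearMapping Φ) {u₁ u₂ : Fin p → ℝ} {v₁ v₂ : Fin q → ℝ}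
    (h₁ : v₁ ∈ Φ u₁) (h₂ : v₂ ∈ Φ u₂) : v₁ + v₂ ∈ Φ (u₁ + u₂) := by
  obtain ⟨h0, hconv, hcone⟩ := hsub
  have h₁' : ((u₁, v₁) : (Fin p → ℝ) × (Fin q → ℝ)) ∈ graphOf Φ := h₁
  have h₂' : ((u₂, v₂) : (Fin p → ℝ) × (Fin q → ℝ)) ∈ graphOf Φ := h₂
  have h12 : ((1:ℝ)/2) • ((u₁, v₁) : (Fin p → ℝ) × (Fin q → ℝ)) + ((1:ℝ)/2) • (u₂, v₂)
      ∈ graphOf Φ := hconv h₁' h₂' (by norm_num) (by norm_num) (by norm_num)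
  have hkey := hcone 2 (by norm_num) _ h12
  have heq : (2:ℝ) • (((1:ℝ)/2) • ((u₁, v₁) : (Fin p → ℝ) × (Fin q → ℝ)) + ((1:ℝ)/2) • (u₂, v₂))
      = (u₁ + u₂, v₁ + v₂) := by
    rw [smul_add, smul_smul, smul_smul]
    norm_num
  rw [heq] at hkey
  exact hkey

lemma sub_smul_mem (hsub : IsSublinearMapping Φ) {t : ℝ} (ht : 0 ≤ t) {u : Fin p → ℝ}
    {v : Fin q → ℝ} (h : v ∈ Φ u) : t • v ∈ Φ (t • u) := by
  have := hsub.2.2 t ht (u, v) h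
  exact this

lemma sub_sum_mem (hsub : IsSublinearMapping Φ) {ι : Type*} (s : Finset ι)
    (x : ι → Fin p → ℝ) (y : ι → Fin q → ℝ) (h : ∀ i ∈ s, y i ∈ Φ (x i)) :
    (∑ i ∈ s, y i) ∈ Φ (∑ i ∈ s, x i) := by
  induction s using Finset.cons_induction with
  | empty => simpa using hsub.1
  | cons a s ha ih =>
    rw [Finset.sum_cons, Finset.sum_cons]
    exact sub_add_mem hsub (h a (Finset.mem_cons_self a s))
      (ih fun i hi => h i (Finset.mem_cons_of_mem hi))

lemma invOf_closed (hpoly : IsPolyhedralMapping Φ) (v : Fin q → ℝ) :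
    IsClosed (invOf Φ v) := by
  obtain ⟨k, f, c, hG⟩ := hpoly
  have h1 : invOf Φ v = (fun u => ((u, v) : (Fin p → ℝ) × (Fin q → ℝ))) ⁻¹' (graphOf Φ) := rfl
  rw [h1, hG]
  have h2 : {x : (Fin p → ℝ) × (Fin q → ℝ) | ∀ i, f i x ≤ c i}
      = ⋂ i, (f i) ⁻¹' Set.Iic (c i) := by
    ext z; simp [Set.mem_iInter]
  rw [h2]
  refine IsClosed.preimage (Continuous.prodMk continuous_id continuous_const) ?_
  exact isClosed_iInter fun i =>
    IsClosed.preimage (f i).continuous_of_finiteDimensional isClosed_Iic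

/-- Boundedness: a linear selection bound on the domain. -/
lemma exists_bound {νp : (Fin p → ℝ) → ℝ} {νq : (Fin q → ℝ) → ℝ}
    (hνp : IsNorm νp) (hνq : IsNorm νq) (hsub : IsSublinearMapping Φ)
    (hdom : IsLinearSubspace (domOf Φ)) :
    ∃ M : ℝ, 0 ≤ M ∧ ∀ u ∈ domOf Φ, ∃ w ∈ Φ u, νq w ≤ M * νp u := by
  classical
  obtain ⟨c, hc, hlow⟩ := hνp.exists_lower
  obtain ⟨W, hW⟩ := hdom
  set k := Module.finrank ℝ W with hk
  let b : Module.Basis (Fin k) ℝ W := Module.finBasis ℝ W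
  have hmemdom : ∀ z : W, (z : Fin p → ℝ) ∈ domOf Φ := fun z => by rw [hW]; exact z.2
  have hwp : ∀ j : Fin k, ∃ w, w ∈ Φ ((b j : W) : Fin p → ℝ) := fun j => hmemdom (b j)
  have hwm : ∀ j : Fin k, ∃ w, w ∈ Φ (-((b j : W) : Fin p → ℝ)) := fun j => by
    have := hmemdom (-(b j))
    simp at this
    exact this
  choose wp hwp' using hwp
  choose wm hwm' using hwm
  let L : Fin k → W →L[ℝ] ℝ := fun j => LinearMap.toContinuousLinearMap (b.coord j)
  let B : Fin k → ℝ := fun j => max (νq (wp j)) (νq (wm j))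
  have hB : ∀ j, 0 ≤ B j := fun j => le_trans (hνq.nonneg _) (le_max_left _ _)
  refine ⟨c⁻¹ * ∑ j, ‖L j‖ * B j, mul_nonneg (inv_nonneg.2 hc.le)
    (Finset.sum_nonneg fun j _ => mul_nonneg (L j).opNorm_nonneg (hB j)), fun u hu => ?_⟩
  have hu' : u ∈ W := by rw [hW] at hu; exact hu
  set uW : W := ⟨u, hu'⟩ with huW
  set t : Fin k → ℝ := fun j => b.repr uW j with ht
  have htabs : ∀ j, |t j| ≤ ‖L j‖ * ‖u‖ := by
    intro j
    have h1 : t j = L j uW := by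
      simp only [ht, L, LinearMap.coe_toContinuousLinearMap', Module.Basis.coord_apply]
    have h2 := (L j).le_opNorm uW
    rw [← h1] at h2
    have h3 : ‖uW‖ = ‖u‖ := rfl
    rw [h3] at h2
    simpa [Real.norm_eq_abs] using h2
  set wc : Fin k → Fin q → ℝ :=
    fun j => if 0 ≤ t j then t j • wp j else (-(t j)) • wm j with hwc
  have hxu : ∑ j, t j • ((b j : W) : Fin p → ℝ) = u := by
    have h1 := congrArg (W.subtype) (b.sum_repr uW)
    rw [map_sum] at h1
    simpa only [map_smul, Submodule.subtype_apply] using h1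
  have hmem : (∑ j, wc j) ∈ Φ u := by
    rw [← hxu]
    refine sub_sum_mem hsub _ (fun j => t j • ((b j : W) : Fin p → ℝ)) wc fun j _ => ?_
    by_cases h0 : 0 ≤ t j
    · simp only [hwc, if_pos h0]
      exact sub_smul_mem hsub h0 (hwp' j)
    · simp only [hwc, if_neg h0]
      push_neg at h0
      have := sub_smul_mem hsub (le_of_lt (neg_pos.2 h0)) (hwm' j)
      rwa [smul_neg, neg_smul, neg_neg] at this
  refine ⟨∑ j, wc j, hmem, ?_⟩
  have hb1 : νq (∑ j, wc j) ≤ ∑ j, νq (wc j) := hνq.sum_le _ _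
  have hb2 : ∀ j, νq (wc j) ≤ |t j| * B j := by
    intro j
    by_cases h0 : 0 ≤ t j
    · simp only [hwc, if_pos h0]
      rw [hνq.smul]
      exact mul_le_mul_of_nonneg_left (le_max_left _ _) (abs_nonneg _)
    · simp only [hwc, if_neg h0]
      rw [hνq.smul, abs_neg]
      exact mul_le_mul_of_nonneg_left (le_max_right _ _) (abs_nonneg _)
  have hb3 : ∀ j, |t j| * B j ≤ (‖L j‖ * B j) * ‖u‖ := by
    intro j
    have := mul_le_mul_of_nonneg_right (htabs j) (hB j)
    calc |t j| * B j ≤ (‖L j‖ * ‖u‖) * B j := this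
      _ = (‖L j‖ * B j) * ‖u‖ := by ring
  have hcu : ‖u‖ ≤ c⁻¹ * νp u := by
    rw [← div_eq_inv_mul, le_div_iff₀ hc]
    linarith [hlow u]
  calc νq (∑ j, wc j) ≤ ∑ j, νq (wc j) := hb1
    _ ≤ ∑ j, (‖L j‖ * B j) * ‖u‖ :=
        Finset.sum_le_sum fun j _ => le_trans (hb2 j) (hb3 j)
    _ = (∑ j, ‖L j‖ * B j) * ‖u‖ := by rw [Finset.sum_mul]
    _ ≤ (∑ j, ‖L j‖ * B j) * (c⁻¹ * νp u) := by
        refine mul_le_mul_of_nonneg_left hcu ?_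
        exact Finset.sum_nonneg fun j _ => mul_nonneg (L j).opNorm_nonneg (hB j)
    _ = c⁻¹ * (∑ j, ‖L j‖ * B j) * νp u := by ring

end cone

end HoffmanAux

/-- If `Φ` is polyhedral sublinear and `dom(Φ)` is a linear subspace,
then `H(Φ) = ‖Φ‖`. -/
theorem stmt1 {p q : ℕ} (νp : (Fin p → ℝ) → ℝ) (νq : (Fin q → ℝ) → ℝ)
    (hνp : IsNorm νp) (hνq : IsNorm νq)
    (Φ : (Fin p → ℝ) → Set (Fin q → ℝ)) (hpoly : IsPolyhedralMapping Φ)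
    (hsub : IsSublinearMapping Φ) (hdom : IsLinearSubspace (domOf Φ)) :
    hoffmanConst νp νq Φ = svmNorm νp νq Φ := by
  classical
  obtain ⟨W, hW⟩ := hdom
  have h0Φ : (0 : Fin q → ℝ) ∈ Φ 0 := hsub.1
  have hdom0 : (0 : Fin p → ℝ) ∈ domOf Φ := ⟨0, h0Φ⟩
  have him0 : (0 : Fin q → ℝ) ∈ imOf Φ := Set.mem_iUnion.2 ⟨0, h0Φ⟩
  obtain ⟨M, hM, hMb⟩ := exists_bound hνp hνq hsub ⟨W, hW⟩
  have hn_nonneg : ∀ u : Fin p → ℝ, 0 ≤ sInf (νq '' Φ u) := fun u =>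
    Real.sInf_nonneg fun r hr => by
      obtain ⟨w, _, rfl⟩ := hr
      exact hνq.nonneg w
  have hn_le : ∀ (u : Fin p → ℝ) (w : Fin q → ℝ), w ∈ Φ u → sInf (νq '' Φ u) ≤ νq w :=
    fun u w hw =>
    csInf_le ⟨0, fun r hr => by obtain ⟨w', _, rfl⟩ := hr; exact hνq.nonneg w'⟩
      (Set.mem_image_of_mem _ hw)
  have hn_bound : ∀ u ∈ domOf Φ, sInf (νq '' Φ u) ≤ M * νp u := fun u hu => by
    obtain ⟨w, hw, hwle⟩ := hMb u hu
    exact (hn_le u w hw).trans hwle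
  set S1 := {r | ∃ u, u ∈ domOf Φ ∧ νp u ≤ 1 ∧ r = sInf (νq '' Φ u)} with hS1def
  set N := svmNorm νp νq Φ with hNdef
  have hNsSup : N = sSup S1 := rfl
  have hS1_bdd : BddAbove S1 := by
    refine ⟨M, fun r hr => ?_⟩
    obtain ⟨u, hu, hu1, rfl⟩ := hr
    calc sInf (νq '' Φ u) ≤ M * νp u := hn_bound u hu
      _ ≤ M * 1 := mul_le_mul_of_nonneg_left hu1 hM
      _ = M := mul_one M
  have hn0 : sInf (νq '' Φ 0) = 0 := le_antisymm (by
      have := hn_le 0 0 h0Φ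
      rwa [hνq.zero] at this) (hn_nonneg 0)
  have hN0 : 0 ≤ N := by
    have hmem : (0:ℝ) ∈ S1 := ⟨0, hdom0, by rw [hνp.zero]; norm_num, hn0.symm⟩
    rw [hNsSup]
    exact le_csSup hS1_bdd hmem
  have hkey : ∀ z ∈ domOf Φ, sInf (νq '' Φ z) ≤ N * νp z := by
    intro z hz
    rcases eq_or_ne (νp z) 0 with h0 | h0
    · have hz0 : z = 0 := (hνp.eq_zero_iff z).1 h0
      subst hz0
      rw [hn0, hνp.zero, mul_zero]
    · have hs : 0 < νp z := lt_of_le_of_ne (hνp.nonneg z) (Ne.symm h0)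
      have hz' : (νp z)⁻¹ • z ∈ domOf Φ := by
        rw [hW]
        rw [hW] at hz
        exact W.smul_mem _ hz
      have hνz' : νp ((νp z)⁻¹ • z) = 1 := by
        rw [hνp.smul, abs_of_pos (inv_pos.2 hs), inv_mul_cancel₀ (ne_of_gt hs)]
      have h1 : sInf (νq '' Φ ((νp z)⁻¹ • z)) ≤ N := by
        rw [hNsSup]
        exact le_csSup hS1_bdd ⟨_, hz', le_of_eq hνz', rfl⟩
      have hΦne : (Φ ((νp z)⁻¹ • z)).Nonempty := hz'
      have h2 : ∀ w' ∈ Φ ((νp z)⁻¹ • z), sInf (νq '' Φ z) ≤ νp z * νq w' := by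
        intro w' hw'
        have hmem : (νp z) • w' ∈ Φ z := by
          have := sub_smul_mem hsub hs.le hw'
          rwa [smul_inv_smul₀ (ne_of_gt hs)] at this
        have := hn_le z _ hmem
        rwa [hνq.smul, abs_of_pos hs] at this
      have h3 : sInf (νq '' Φ z) ≤ νp z * sInf (νq '' Φ ((νp z)⁻¹ • z)) := by
        rw [mul_comm, ← div_le_iff₀ hs]
        refine le_csInf (hΦne.image _) ?_
        rintro r ⟨w', hw', rfl⟩
        rw [div_le_iff₀ hs]
        have := h2 w' hw'
        linarith
      calc sInf (νq '' Φ z) ≤ νp z * sInf (νq '' Φ ((νp z)⁻¹ • z)) := h3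
        _ ≤ νp z * N := mul_le_mul_of_nonneg_left h1 hs.le
        _ = N * νp z := mul_comm _ _
  have hmain : ∀ u ∈ domOf Φ, ∀ v ∈ imOf Φ,
      distWith νq v (Φ u) ≤ N * distWith νp u (invOf Φ v) := by
    intro u hu v hv
    obtain ⟨u₀, hu₀⟩ := Set.mem_iUnion.1 hv
    have hinv_ne : (invOf Φ v).Nonempty := ⟨u₀, hu₀⟩
    have step : ∀ ub ∈ invOf Φ v, distWith νq v (Φ u) ≤ N * νp (u - ub) := by
      intro ub hub
      have hubdom : ub ∈ domOf Φ := ⟨v, hub⟩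
      have hsubdom : u - ub ∈ domOf Φ := by
        rw [hW] at hu hubdom ⊢
        exact W.sub_mem hu hubdom
      have hΦne : (Φ (u - ub)).Nonempty := hsubdom
      have hstep1 : ∀ w ∈ Φ (u - ub), distWith νq v (Φ u) ≤ νq w := by
        intro w hw
        have hmem : v + w ∈ Φ u := by
          have h := sub_add_mem hsub hub hw
          have he : ub + (u - ub) = u := by abel
          rwa [he] at h
        have h := distWith_le (x := v) hνq hmem
        calc distWith νq v (Φ u) ≤ νq (v - (v + w)) := h
          _ = νq w := by rw [show v - (v + w) = -w by abel, hνq.neg']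
      have hd1 : distWith νq v (Φ u) ≤ sInf (νq '' Φ (u - ub)) := by
        refine le_csInf (hΦne.image _) ?_
        rintro r ⟨w, hw, rfl⟩
        exact hstep1 w hw
      exact hd1.trans (hkey _ hsubdom)
    rcases eq_or_lt_of_le hN0 with hN0' | hN0'
    · have h1 : distWith νq v (Φ u) ≤ 0 := by
        have h := step u₀ hu₀
        rw [← hN0'] at h
        simpa using h
      have h2 := distWith_nonneg hνq v (Φ u)
      have h3 := distWith_nonneg hνp u (invOf Φ v)
      nlinarith
    · rw [← div_le_iff₀' hN0']
      refine le_distWith hinv_ne ?_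
      intro ub hub
      rw [div_le_iff₀' hN0']
      exact step ub hub
  set S2 := {r | ∃ u v, u ∈ domOf Φ ∧ v ∈ imOf Φ ∧ v ∉ Φ u ∧
    r = distWith νq v (Φ u) / distWith νp u (invOf Φ v)} with hS2def
  have hH : hoffmanConst νp νq Φ = sSup S2 := rfl
  have hS2_le : ∀ r ∈ S2, r ≤ N := by
    rintro r ⟨u, v, hu, hv, hvu, rfl⟩
    have hden := distWith_nonneg hνp u (invOf Φ v)
    rcases eq_or_lt_of_le hden with hden0 | hden0
    · rw [← hden0, div_zero]
      exact hN0
    · rw [div_le_iff₀ hden0]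
      exact hmain u hu v hv
  have hS2_nonneg : ∀ r ∈ S2, 0 ≤ r := by
    rintro r ⟨u, v, hu, hv, hvu, rfl⟩
    exact div_nonneg (distWith_nonneg hνq _ _) (distWith_nonneg hνp _ _)
  have hH_le : sSup S2 ≤ N := Real.sSup_le hS2_le hN0
  have hH0 : 0 ≤ sSup S2 := Real.sSup_nonneg hS2_nonneg
  have hS2_bdd : BddAbove S2 := ⟨N, hS2_le⟩
  have hN_le : N ≤ sSup S2 := by
    rw [hNsSup]
    refine Real.sSup_le ?_ hH0
    rintro r ⟨u, hu, hu1, rfl⟩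
    by_cases h0u : (0 : Fin q → ℝ) ∈ Φ u
    · have hz : sInf (νq '' Φ u) = 0 := le_antisymm (by
        have := hn_le u 0 h0u
        rwa [hνq.zero] at this) (hn_nonneg u)
      rw [hz]
      exact hH0
    · have hnum : distWith νq 0 (Φ u) = sInf (νq '' Φ u) := by
        unfold distWith
        congr 1
        have : (fun s => νq (0 - s)) = νq := by
          funext s
          rw [zero_sub, hνq.neg']
        rw [this]
      have hden_le : distWith νp u (invOf Φ 0) ≤ 1 := by
        have h00 : (0 : Fin p → ℝ) ∈ invOf Φ 0 := h0Φ
        have h := distWith_le (x := u) hνp h00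
        rw [sub_zero] at h
        exact h.trans hu1
      have hden_pos : 0 < distWith νp u (invOf Φ 0) :=
        distWith_pos hνp (invOf_closed hpoly 0) ⟨0, h0Φ⟩ h0u
      have hmem : distWith νq 0 (Φ u) / distWith νp u (invOf Φ 0) ∈ S2 :=
        ⟨u, 0, hu, him0, h0u, rfl⟩
      have hr_le : sInf (νq '' Φ u) ≤ distWith νq 0 (Φ u) / distWith νp u (invOf Φ 0) := by
        rw [le_div_iff₀ hden_pos, hnum]
        exact mul_le_of_le_one_right (hn_nonneg u) hden_le
      exact hr_le.trans (le_csSup hS2_bdd hmem)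
  rw [hH]
  exact le_antisymm hH_le hN_le
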